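/- Let γ > 0, σ > 0, and let X be a real random variable with the generalized normal density f(x) = γ/(2σΓ(1/γ)) · exp(−|x/σ|^γ) (location parameter 0). Then the exponential Orlicz norm of X of order γ equals σ/(1 − 2^{−γ})^{1/γ}, i.e., ‖X‖_{ψ_γ} = σ (1 − 2^{−γ})^{−1/γ}; moreover γ is the largest α for which ‖X‖_{ψ_α} is finite. -/

import Mathlib

open MeasureTheory Real
open scoped ENNReal

noncomputable section

/-- The set of admissible constants in the definition of the exponential
Orlicz (quasi-)norm of order `a` of a real random variable `X` under `μ`. -/
def orliczSet {Ω : Type*} [MeasurableSpace Ω] (μ : Measure Ω) (a : ℝ) (X : Ω → ℝ) : Set ℝ :=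
  {t : ℝ | 0 < t ∧ ∫⁻ ω, ENNReal.ofReal (Real.exp (|X ω| ^ a / t ^ a)) ∂μ ≤ 2}

/-- The exponential Orlicz norm `‖X‖_{ψ_a}`. -/
def orliczNorm {Ω : Type*} [MeasurableSpace Ω] (μ : Measure Ω) (a : ℝ) (X : Ω → ℝ) : ℝ :=
  sInf (orliczSet μ a X)

/-- Euclidean dot product on `Fin p → ℝ`. -/
def dotp {p : ℕ} (u v : Fin p → ℝ) : ℝ := ∑ i, u i * v i

/-- Squared Euclidean norm on `Fin p → ℝ`. -/
def sqnorm {p : ℕ} (u : Fin p → ℝ) : ℝ := ∑ i, u i ^ 2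

/-- Euclidean norm on `Fin p → ℝ`. -/
def euclNorm {p : ℕ} (u : Fin p → ℝ) : ℝ := Real.sqrt (sqnorm u)

/-- Total variation distance between two measures. -/
def tvDist {Ω : Type*} [MeasurableSpace Ω] (P Q : Measure Ω) : ℝ :=
  ⨆ s : {s : Set Ω // MeasurableSet s}, |(P s.1).toReal - (Q s.1).toReal|

/-- The uniform distribution on `{-1, 1} ⊆ ℝ`. -/
def signMeasure : Measure ℝ :=
  (2 : ℝ≥0∞)⁻¹ • Measure.dirac (-1) + (2 : ℝ≥0∞)⁻¹ • Measure.dirac 1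

instance : IsProbabilityMeasure signMeasure := by
  constructor
  simp [signMeasure, Measure.add_apply, Measure.smul_apply, smul_eq_mul]
  exact ENNReal.inv_two_add_inv_two

/-- The label-flip distribution: takes the value `-1` with probability `η`
and the value `1` with probability `1 - η`. -/
def flipM (η : ℝ) : Measure ℝ :=
  ENNReal.ofReal η • Measure.dirac (-1) + ENNReal.ofReal (1 - η) • Measure.dirac 1

instance (η : ℝ) : IsFiniteMeasure (flipM η) := by
  constructor
  simp only [flipM, Measure.add_apply, Measure.smul_apply, smul_eq_mul, measure_univ, mul_one]
  exact ENNReal.add_lt_top.mpr ⟨ENNReal.ofReal_lt_top, ENNReal.ofReal_lt_top⟩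

/-- The "clean" distribution `P̃`: the law of `(U q + ỹ μ, ỹ)` where `q ∼ P_clust` and
`ỹ` is a uniform random sign, independent of `q`. -/
def cleanDist {p : ℕ} (Pc : Fin p → Measure ℝ) [∀ j, SigmaFinite (Pc j)]
    (U : Matrix (Fin p) (Fin p) ℝ) (μv : Fin p → ℝ) : Measure ((Fin p → ℝ) × ℝ) :=
  ((Measure.pi Pc).prod signMeasure).map fun qy => (U.mulVec qy.1 + qy.2 • μv, qy.2)

/-- Largest singular value of a matrix, i.e. its Euclidean operator norm. -/
def s1 {p n : ℕ} (X : Matrix (Fin p) (Fin n) ℝ) : ℝ :=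
  sSup {r : ℝ | ∃ u : Fin n → ℝ, sqnorm u ≤ 1 ∧ r = euclNorm (X.mulVec u)}

/-- Linear separability of a labelled sample. -/
def LinSep {p n : ℕ} (x : Fin n → Fin p → ℝ) (y : Fin n → ℝ) : Prop :=
  ∃ v : Fin p → ℝ, ∀ i, 0 < y i * dotp v (x i)

/-- `w` is the maximum margin (minimum norm) classifier for the sample `(x, y)`. -/
def IsMaxMargin {p n : ℕ} (x : Fin n → Fin p → ℝ) (y : Fin n → ℝ) (w : Fin p → ℝ) : Prop :=
  (∀ i, 1 ≤ y i * dotp w (x i)) ∧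
    ∀ u : Fin p → ℝ, (∀ i, 1 ≤ y i * dotp u (x i)) → euclNorm w ≤ euclNorm u

/-- The generalized normal distribution with location `0`, scale `σ` and shape `γ`. -/
def genNormal (σ γ : ℝ) : Measure ℝ :=
  volume.withDensity fun x =>
    ENNReal.ofReal (γ / (2 * σ * Real.Gamma (1 / γ)) * Real.exp (-|x / σ| ^ γ))

/-- The sample-generating measure in the reduced model (`U = I`): independent coordinates
`q_k ∼ P_clust` (i.i.d.), `ỹ_k` uniform signs (i.i.d.), and label-flip signs `ε_k` (i.i.d.,
`ε_k = -1` with probability `η`). -/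
def sampleMeasure (p n : ℕ) (Pc : Fin p → Measure ℝ) [∀ j, SigmaFinite (Pc j)] (η : ℝ) :
    Measure ((Fin n → Fin p → ℝ) × ((Fin n → ℝ) × (Fin n → ℝ))) :=
  (Measure.pi fun _ : Fin n => Measure.pi Pc).prod
    ((Measure.pi fun _ : Fin n => signMeasure).prod (Measure.pi fun _ : Fin n => flipM η))

/-- The input vector `x = q + ỹ μ` in the reduced model. -/
def xvec {p : ℕ} (μv : Fin p → ℝ) (q : Fin p → ℝ) (ty : ℝ) : Fin p → ℝ :=
  fun i => q i + ty * μv i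

/-- The vector `z = y x = (ε ỹ) (q + ỹ μ)` in the reduced model. -/
def zvec {p : ℕ} (μv : Fin p → ℝ) (q : Fin p → ℝ) (ty e : ℝ) : Fin p → ℝ :=
  fun i => e * ty * (q i + ty * μv i)

end

section Aux

open Set

/-- If `f` is integrable on `(0, ∞)`, then `x ↦ f |x|` is integrable on `ℝ`. -/
lemma aux_integrable_comp_abs {f : ℝ → ℝ} (hf : IntegrableOn f (Ioi 0)) :
    Integrable (fun x => f |x|) := by
  have hf' : IntegrableOn (fun x => f |x|) (Ioi 0) := by
    refine (integrableOn_congr_fun (fun x hx => ?_) measurableSet_Ioi).mpr hf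
    rw [abs_of_pos hx]
  have int_Iic : IntegrableOn (fun x ↦ f |x|) (Iic 0) := by
    rw [← Measure.map_neg_eq_self (volume : Measure ℝ)]
    have m : MeasurableEmbedding fun x : ℝ => -x := (Homeomorph.neg ℝ).measurableEmbedding
    rw [m.integrableOn_map_iff]
    simp_rw [Function.comp_def, abs_neg, neg_preimage, neg_Iic, neg_zero]
    exact (integrableOn_Ici_iff_integrableOn_Ioi).mpr hf'
  have := int_Iic.union hf'
  rwa [Iic_union_Ioi, integrableOn_univ] at this

lemma aux_integrableOn_exp_neg_mul_rpow {b p : ℝ} (hp : 0 < p) (hb : 0 < b) :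
    IntegrableOn (fun x : ℝ => Real.exp (-(b * x ^ p))) (Ioi 0) := by
  refine (integrableOn_Ioi_comp_rpow_iff' (fun x : ℝ => Real.exp (-(b * x ^ p)))
    (p := p⁻¹) (inv_ne_zero hp.ne')).mp ?_
  have h1 : IntegrableOn (fun x : ℝ => x ^ (p⁻¹ - 1) * Real.exp (-b * x ^ (1 : ℝ))) (Ioi 0) :=
    integrableOn_rpow_mul_exp_neg_mul_rpow (by simp [inv_pos.mpr hp]) one_pos hb
  refine (integrableOn_congr_fun (fun x hx => ?_) measurableSet_Ioi).mpr h1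
  rw [smul_eq_mul, ← Real.rpow_mul (le_of_lt hx), inv_mul_cancel₀ hp.ne', neg_mul]

/-- unfolding the `genNormal` density inside a Lebesgue integral -/
lemma aux_L0 {γ σ : ℝ} (hγ : 0 < γ) (hσ : 0 < σ) (g : ℝ → ℝ) (hg : Measurable g) :
    ∫⁻ x, ENNReal.ofReal (Real.exp (g x)) ∂(genNormal σ γ) =
      ∫⁻ x, ENNReal.ofReal
        (γ / (2 * σ * Real.Gamma (1 / γ)) * Real.exp (g x - |x| ^ γ / σ ^ γ)) := by
  have hD : Measurable fun x : ℝ =>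
      ENNReal.ofReal (γ / (2 * σ * Real.Gamma (1 / γ)) * Real.exp (-|x / σ| ^ γ)) := by
    fun_prop
  have hG : Measurable fun x : ℝ => ENNReal.ofReal (Real.exp (g x)) := by fun_prop
  rw [genNormal, lintegral_withDensity_eq_lintegral_mul _ hD hG]
  refine lintegral_congr fun x => ?_
  have habs : |x / σ| ^ γ = |x| ^ γ / σ ^ γ := by
    rw [abs_div, abs_of_pos hσ, Real.div_rpow (abs_nonneg x) hσ.le]
  simp only [Pi.mul_apply]
  rw [← ENNReal.ofReal_mul (by positivity), habs, mul_assoc, ← Real.exp_add]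
  ring_nf

/-- divergence of the integral when the exponent is eventually nonnegative -/
lemma aux_top {c : ℝ} (hc : 0 < c) {f : ℝ → ℝ} (R : ℝ) (h : ∀ x ∈ Ici R, 0 ≤ f x) :
    ∫⁻ x, ENNReal.ofReal (c * Real.exp (f x)) = ⊤ := by
  refine eq_top_iff.mpr ?_
  calc (⊤ : ℝ≥0∞) = ENNReal.ofReal c * volume (Ici R) := by
        rw [Real.volume_Ici, ENNReal.mul_top (by simp [ENNReal.ofReal_eq_zero, not_le, hc])]
    _ = ∫⁻ x, (Ici R).indicator (fun _ => ENNReal.ofReal c) x := by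
        rw [lintegral_indicator measurableSet_Ici, setLIntegral_const]
    _ ≤ ∫⁻ x, ENNReal.ofReal (c * Real.exp (f x)) := by
        refine lintegral_mono fun x => ?_
        by_cases hx : x ∈ Ici R
        · simp only [indicator_of_mem hx]
          refine ENNReal.ofReal_le_ofReal ?_
          nlinarith [Real.one_le_exp (h x hx), Real.exp_pos (f x)]
        · simp [indicator_of_notMem hx]

/-- the exact value of the integral for `σ < t` -/
lemma aux_I2 {γ σ t : ℝ} (hγ : 0 < γ) (hσ : 0 < σ) (ht : σ < t) :
    ∫⁻ x, ENNReal.ofReal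
        (γ / (2 * σ * Real.Gamma (1 / γ)) * Real.exp (|x| ^ γ / t ^ γ - |x| ^ γ / σ ^ γ)) =
      ENNReal.ofReal ((1 - (σ / t) ^ γ) ^ (-(1 / γ))) := by
  have ht0 : (0 : ℝ) < t := hσ.trans ht
  have hσγ : (0 : ℝ) < σ ^ γ := Real.rpow_pos_of_pos hσ γ
  have htγ : (0 : ℝ) < t ^ γ := Real.rpow_pos_of_pos ht0 γ
  have hlt : σ ^ γ < t ^ γ := Real.rpow_lt_rpow hσ.le ht hγ
  set b : ℝ := 1 / σ ^ γ - 1 / t ^ γ with hb_def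
  have hb : 0 < b := sub_pos.mpr (one_div_lt_one_div_of_lt hσγ hlt)
  have hΓ : 0 < Real.Gamma (1 / γ) := Real.Gamma_pos_of_pos (by positivity)
  set c : ℝ := γ / (2 * σ * Real.Gamma (1 / γ)) with hc_def
  have hc : 0 < c := by positivity
  have hrw : ∀ x : ℝ, |x| ^ γ / t ^ γ - |x| ^ γ / σ ^ γ = -(b * |x| ^ γ) := by
    intro x
    rw [hb_def]
    field_simp
    ring
  have hint : Integrable (fun x : ℝ => c * Real.exp (-(b * |x| ^ γ))) :=
    (aux_integrable_comp_abs (aux_integrableOn_exp_neg_mul_rpow hγ hb)).const_mul c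
  calc ∫⁻ x, ENNReal.ofReal (c * Real.exp (|x| ^ γ / t ^ γ - |x| ^ γ / σ ^ γ))
      = ∫⁻ x, ENNReal.ofReal (c * Real.exp (-(b * |x| ^ γ))) := by
        refine lintegral_congr fun x => ?_
        rw [hrw x]
    _ = ENNReal.ofReal (∫ x, c * Real.exp (-(b * |x| ^ γ))) := by
        rw [MeasureTheory.ofReal_integral_eq_lintegral_ofReal hint
          (Filter.Eventually.of_forall fun x => by positivity)]
    _ = ENNReal.ofReal ((1 - (σ / t) ^ γ) ^ (-(1 / γ))) := by
        congr 1
        rw [MeasureTheory.integral_const_mul]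
        rw [show (∫ x : ℝ, Real.exp (-(b * |x| ^ γ)))
            = 2 * ∫ x in Ioi (0 : ℝ), Real.exp (-(b * x ^ γ)) from
          integral_comp_abs (f := fun y => Real.exp (-(b * y ^ γ)))]
        have := integral_exp_neg_mul_rpow hγ hb
        simp_rw [neg_mul] at this
        rw [this, Real.Gamma_add_one (by positivity : (1 : ℝ) / γ ≠ 0)]
        have h1 : 1 - (σ / t) ^ γ = σ ^ γ * b := by
          rw [Real.div_rpow hσ.le ht0.le, hb_def]
          field_simp
        rw [h1, Real.mul_rpow hσγ.le hb.le, ← Real.rpow_mul hσ.le,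
          show γ * -(1 / γ) = -1 by field_simp, Real.rpow_neg_one,
          show -1 / γ = -(1 / γ) from by ring, hc_def]
        field_simp
  
end Aux

/-- for the generalized normal distribution with location `0`, scale `σ`
and shape `γ`, the exponential Orlicz norm of order `γ` equals `σ (1 − 2^{−γ})^{−1/γ}`;
moreover the `ψ_γ` norm is finite (the admissible set is nonempty) and `γ` is the largest
order `α` with finite `ψ_α` norm (for `α > γ` the admissible set is empty). -/
theorem genNormal_orlicz_norm (γ σ : ℝ) (hγ : 0 < γ) (hσ : 0 < σ) :
    orliczNorm (genNormal σ γ) γ (fun x => x) = σ * (1 - 2 ^ (-γ)) ^ (-(1 / γ)) ∧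
    (orliczSet (genNormal σ γ) γ (fun x => x)).Nonempty ∧
    ∀ a : ℝ, γ < a → orliczSet (genNormal σ γ) a (fun x => x) = ∅ := by
  have hΓ : 0 < Real.Gamma (1 / γ) := Real.Gamma_pos_of_pos (by positivity)
  have hc : 0 < γ / (2 * σ * Real.Gamma (1 / γ)) := by positivity
  have h2γ : (0 : ℝ) < 2 ^ (-γ) := Real.rpow_pos_of_pos two_pos _
  have h2γ1 : (2 : ℝ) ^ (-γ) < 1 :=
    Real.rpow_lt_one_of_one_lt_of_neg one_lt_two (neg_lt_zero.mpr hγ)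
  have hK : (0 : ℝ) < 1 - 2 ^ (-γ) := by linarith
  set K : ℝ := 1 - 2 ^ (-γ) with hK_def
  set t0 : ℝ := σ * K ^ (-(1 / γ)) with ht0_def
  have hKγ : (0 : ℝ) < K ^ γ⁻¹ := Real.rpow_pos_of_pos hK _
  have hσt0 : σ < t0 := by
    have : (1 : ℝ) < K ^ (-(1 / γ)) := by
      rw [Real.one_lt_rpow_iff_of_pos hK]
      right
      constructor
      · linarith
      · simp only [neg_neg, neg_lt, neg_zero]
        positivity
    calc σ = σ * 1 := (mul_one σ).symm
      _ < t0 := by rw [ht0_def]; exact mul_lt_mul_of_pos_left this hσ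
  -- the key characterization for σ < t
  have char : ∀ t : ℝ, σ < t →
      (ENNReal.ofReal ((1 - (σ / t) ^ γ) ^ (-(1 / γ))) ≤ 2 ↔ t0 ≤ t) := by
    intro t ht
    have ht0' : (0 : ℝ) < t := hσ.trans ht
    have hA : (σ / t) ^ γ < 1 :=
      Real.rpow_lt_one (by positivity) ((div_lt_one ht0').mpr ht) hγ
    have h1A : (0 : ℝ) < 1 - (σ / t) ^ γ := by linarith
    rw [show (2 : ℝ≥0∞) = ENNReal.ofReal 2 by norm_num,
      ENNReal.ofReal_le_ofReal_iff (by norm_num)]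
    have step1 : (1 - (σ / t) ^ γ) ^ (-(1 / γ)) ≤ 2 ↔ (2 : ℝ) ^ (-γ) ≤ 1 - (σ / t) ^ γ := by
      rw [show -(1 / γ) = (-γ)⁻¹ by rw [inv_neg, one_div]]
      exact Real.rpow_inv_le_iff_of_neg h1A two_pos (neg_lt_zero.mpr hγ)
    have step2 : (2 : ℝ) ^ (-γ) ≤ 1 - (σ / t) ^ γ ↔ σ / t ≤ K ^ γ⁻¹ := by
      rw [Real.le_rpow_inv_iff_of_pos (by positivity) hK.le hγ]
      constructor <;> intro h <;> [skip; skip] <;> rw [hK_def] at * <;> linarith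
    have step3 : σ / t ≤ K ^ γ⁻¹ ↔ t0 ≤ t := by
      rw [div_le_iff₀ ht0', ht0_def, Real.rpow_neg hK.le, one_div,
        ← div_eq_mul_inv, div_le_iff₀ hKγ, mul_comm t]
    rw [step1, step2, step3]
  -- the value of the lintegral for σ < t
  have hval : ∀ t : ℝ, σ < t →
      (∫⁻ x, ENNReal.ofReal (Real.exp (|x| ^ γ / t ^ γ)) ∂(genNormal σ γ)) =
        ENNReal.ofReal ((1 - (σ / t) ^ γ) ^ (-(1 / γ))) := by
    intro t ht
    rw [aux_L0 hγ hσ (fun x => |x| ^ γ / t ^ γ) (by fun_prop), aux_I2 hγ hσ ht]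
  -- divergence of the lintegral for 0 < t ≤ σ
  have htop : ∀ t : ℝ, 0 < t → t ≤ σ →
      (∫⁻ x, ENNReal.ofReal (Real.exp (|x| ^ γ / t ^ γ)) ∂(genNormal σ γ)) = ⊤ := by
    intro t ht htσ
    rw [aux_L0 hγ hσ (fun x => |x| ^ γ / t ^ γ) (by fun_prop)]
    refine aux_top hc 0 fun x _ => ?_
    have h1 : t ^ γ ≤ σ ^ γ := Real.rpow_le_rpow ht.le htσ hγ.le
    have h2 : |x| ^ γ / σ ^ γ ≤ |x| ^ γ / t ^ γ :=
      div_le_div_of_nonneg_left (by positivity) (Real.rpow_pos_of_pos ht γ) h1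
    linarith
  -- the admissible set is `Ici t0`
  have hset : orliczSet (genNormal σ γ) γ (fun x => x) = Set.Ici t0 := by
    ext t
    simp only [orliczSet, Set.mem_setOf_eq, Set.mem_Ici]
    constructor
    · rintro ⟨ht, hI⟩
      rcases le_or_gt t σ with h | h
      · rw [htop t ht h] at hI
        exact absurd hI (by simp)
      · rw [hval t h] at hI
        exact (char t h).mp hI
    · intro h
      have ht : σ < t := lt_of_lt_of_le hσt0 h
      refine ⟨hσ.trans ht, ?_⟩
      rw [hval t ht]
      exact (char t ht).mpr h
  refine ⟨?_, ?_, ?_⟩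
  · rw [orliczNorm, hset, csInf_Ici]
  · rw [hset]
    exact ⟨t0, Set.self_mem_Ici⟩
  · intro a ha
    ext t
    simp only [orliczSet, Set.mem_setOf_eq, Set.mem_empty_iff_false, iff_false, not_and]
    intro ht
    rw [aux_L0 hγ hσ (fun x => |x| ^ a / t ^ a) (by fun_prop)]
    have ha0 : 0 < a := hγ.trans ha
    have haγ : 0 < a - γ := by linarith
    set R : ℝ := max 1 ((t ^ a / σ ^ γ) ^ (a - γ)⁻¹) with hR_def
    rw [aux_top hc R ?_]
    · simp
    · intro x hx
      have hx1 : (1 : ℝ) ≤ x := le_trans (le_max_left _ _) hx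
      have hx0 : (0 : ℝ) < x := lt_of_lt_of_le one_pos hx1
      have hMpos : (0 : ℝ) < t ^ a / σ ^ γ := by
        have := Real.rpow_pos_of_pos ht a
        have := Real.rpow_pos_of_pos hσ γ
        positivity
      have key : t ^ a / σ ^ γ ≤ x ^ (a - γ) := by
        calc t ^ a / σ ^ γ = ((t ^ a / σ ^ γ) ^ (a - γ)⁻¹) ^ (a - γ) := by
              rw [← Real.rpow_mul hMpos.le, inv_mul_cancel₀ haγ.ne', Real.rpow_one]
          _ ≤ x ^ (a - γ) :=
              Real.rpow_le_rpow (Real.rpow_nonneg hMpos.le _)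
                (le_trans (le_max_right _ _) hx) haγ.le
      have habs : |x| = x := abs_of_pos hx0
      rw [habs]
      have hxa : x ^ a = x ^ γ * x ^ (a - γ) := by
        rw [← Real.rpow_add hx0]
        ring_nf
      have hσγ : (0 : ℝ) < σ ^ γ := Real.rpow_pos_of_pos hσ γ
      have hta : (0 : ℝ) < t ^ a := Real.rpow_pos_of_pos ht a
      rw [sub_nonneg, div_le_div_iff₀ hσγ hta, hxa]
      have hxγ : (0 : ℝ) ≤ x ^ γ := Real.rpow_nonneg hx0.le γ
      calc x ^ γ * t ^ a = x ^ γ * (t ^ a / σ ^ γ) * σ ^ γ := by field_simp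
        _ ≤ x ^ γ * x ^ (a - γ) * σ ^ γ := by
            have := mul_le_mul_of_nonneg_left key hxγ
            nlinarith
        _ = x ^ γ * x ^ (a - γ) * σ ^ γ := rfl
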